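/- Let p₁,...,p_m be independent random variables taking values in [0,1], let H₀ ⊆ {1,...,m}, and assume each null p-value is superuniform: ℙ(p_i ≤ t) ≤ t for all t ∈ [0,1] and all i ∈ H₀. Fix α ∈ (0,1] and let ℛ be the rejection set of the Benjamini–Hochberg procedure BH(α), the step-up procedure with thresholds Δ(r) = αr/m. Then the false discovery rate satisfies E[ |ℛ ∩ H₀| / max(|ℛ|,1) ] ≤ α·|H₀|/m; moreover, if ℙ(p_i ≤ t) = t for all t ∈ [0,1] and all i ∈ H₀, equality holds. -/

import Mathlib

open MeasureTheory ProbabilityTheory Classical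

/-- The step-up rejection count: `R(p) = max {r ∈ {0,…,m} : p_(r) ≤ Δ(r)}` (with `R(p) = 0`
if no `r ≥ 1` satisfies the condition), where `p_(r)` is the `r`-th smallest coordinate of `p`. -/
noncomputable def stepUpCount {m : ℕ} (Δ : ℕ → ℝ) (p : Fin m → ℝ) : ℕ :=
  Nat.findGreatest
    (fun r => ∃ h : r - 1 < m, 0 < r ∧ p (Tuple.sort p ⟨r - 1, h⟩) ≤ Δ r) m

/-- The step-up rejection set: `ℛ(p) = {j : p_j ≤ Δ(R(p))}` if `R(p) ≥ 1`, else `∅`.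
The Benjamini–Hochberg procedure `BH(α)` is the case `Δ(r) = αr/m`. -/
noncomputable def rejectSet {m : ℕ} (Δ : ℕ → ℝ) (p : Fin m → ℝ) : Finset (Fin m) :=
  if 0 < stepUpCount Δ p then
    Finset.univ.filter (fun j => p j ≤ Δ (stepUpCount Δ p))
  else ∅

namespace BHaux

variable {m : ℕ}

/-- number of coordinates ≤ c -/
noncomputable def cnt (q : Fin m → ℝ) (c : ℝ) : ℕ :=
  (Finset.univ.filter (fun j => q j ≤ c)).card

lemma cnt_le_m (q : Fin m → ℝ) (c : ℝ) : cnt q c ≤ m := by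
  classical
  calc cnt q c ≤ (Finset.univ : Finset (Fin m)).card := Finset.card_filter_le _ _
  _ = m := by simp

lemma cnt_mono_right (q : Fin m → ℝ) {c c' : ℝ} (h : c ≤ c') : cnt q c ≤ cnt q c' := by
  apply Finset.card_le_card
  intro j hj
  simp only [Finset.mem_filter] at *
  exact ⟨hj.1, hj.2.trans h⟩

lemma cnt_anti (h : ∀ j, q' j ≤ q j) (c : ℝ) : cnt q c ≤ cnt q' c := by
  apply Finset.card_le_card
  intro j hj
  simp only [Finset.mem_filter] at *
  exact ⟨hj.1, (h j).trans hj.2⟩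

lemma sorted_le_iff {s : Fin m → ℝ} (hs : Monotone s) (k : Fin m) (c : ℝ) :
    s k ≤ c ↔ (k : ℕ) + 1 ≤ cnt s c := by
  constructor
  · intro h
    have hsub : Finset.Iic k ⊆ Finset.univ.filter (fun j => s j ≤ c) := by
      intro j hj
      simp only [Finset.mem_Iic] at hj
      simp only [Finset.mem_filter, Finset.mem_univ, true_and]
      exact (hs hj).trans h
    calc (k : ℕ) + 1 = (Finset.Iic k).card := (Fin.card_Iic k).symm
    _ ≤ _ := Finset.card_le_card hsub
  · intro h
    by_contra hc
    push_neg at hc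
    have hsub : Finset.univ.filter (fun j => s j ≤ c) ⊆ Finset.Iio k := by
      intro j hj
      simp only [Finset.mem_filter, Finset.mem_univ, true_and] at hj
      simp only [Finset.mem_Iio]
      by_contra hjk
      push_neg at hjk
      exact absurd (le_trans (hs hjk) hj) (not_le.mpr hc)
    have h2 := Finset.card_le_card hsub
    rw [Fin.card_Iio] at h2
    unfold cnt at h
    omega

lemma cnt_comp_perm (q : Fin m → ℝ) (σ : Equiv.Perm (Fin m)) (c : ℝ) :
    cnt (q ∘ σ) c = cnt q c := by
  unfold cnt
  apply Finset.card_bij (fun k _ => σ k)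
  · intro a ha
    simp only [Finset.mem_filter, Finset.mem_univ, true_and, Function.comp] at *
    exact ha
  · intro a _ b _ h
    exact σ.injective h
  · intro b hb
    refine ⟨σ.symm b, ?_, by simp⟩
    simp only [Finset.mem_filter, Finset.mem_univ, true_and, Function.comp,
      Equiv.apply_symm_apply] at *
    exact hb

lemma findGreatest_congr {P Q : ℕ → Prop} [DecidablePred P] [DecidablePred Q] (n : ℕ)
    (h : ∀ k, 0 < k → k ≤ n → (P k ↔ Q k)) :
    Nat.findGreatest P n = Nat.findGreatest Q n := by
  rw [Nat.findGreatest_eq_iff]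
  refine ⟨Nat.findGreatest_le n, ?_, ?_⟩
  · intro hne
    have hpos : 0 < Nat.findGreatest Q n := Nat.pos_of_ne_zero hne
    have hQ := Nat.findGreatest_spec (P := Q) (m := Nat.findGreatest Q n) (Nat.findGreatest_le n)
      (Nat.findGreatest_of_ne_zero rfl hne)
    exact (h _ hpos (Nat.findGreatest_le n)).mpr hQ
  · intro k hk hkn hP
    exact Nat.findGreatest_is_greatest hk hkn ((h k (by omega) hkn).mp hP)

lemma stepUpCount_eq_cnt (Δ : ℕ → ℝ) (q : Fin m → ℝ) :
    stepUpCount Δ q = Nat.findGreatest (fun r => 0 < r ∧ r ≤ cnt q (Δ r)) m := by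
  unfold stepUpCount
  apply findGreatest_congr
  intro k hk hkm
  have hlt : k - 1 < m := by omega
  constructor
  · rintro ⟨h, -, hle⟩
    refine ⟨hk, ?_⟩
    have h2 := (sorted_le_iff (Tuple.monotone_sort q) ⟨k - 1, h⟩ (Δ k)).mp hle
    rw [cnt_comp_perm q (Tuple.sort q) (Δ k)] at h2
    simp only [Fin.val_mk] at h2
    omega
  · rintro ⟨-, hle⟩
    refine ⟨hlt, hk, ?_⟩
    apply (sorted_le_iff (Tuple.monotone_sort q) ⟨k - 1, hlt⟩ (Δ k)).mpr
    rw [cnt_comp_perm q (Tuple.sort q) (Δ k)]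
    simp only [Fin.val_mk]
    omega

lemma stepUpCount_le (Δ : ℕ → ℝ) (q : Fin m → ℝ) : stepUpCount Δ q ≤ m :=
  Nat.findGreatest_le m

variable {Δ : ℕ → ℝ}

lemma cnt_at_R (hΔ : Monotone Δ) (q : Fin m → ℝ) (hR : 0 < stepUpCount Δ q) :
    cnt q (Δ (stepUpCount Δ q)) = stepUpCount Δ q := by
  set R := stepUpCount Δ q with hRdef
  have heq := stepUpCount_eq_cnt Δ q
  have hspec : 0 < R ∧ R ≤ cnt q (Δ R) := by
    apply Nat.findGreatest_of_ne_zero heq.symm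
    omega
  refine le_antisymm ?_ hspec.2
  by_contra hc
  push_neg at hc
  have hRm : R ≤ m := stepUpCount_le Δ q
  rcases eq_or_lt_of_le hRm with hEq | hlt
  · have := cnt_le_m q (Δ R); omega
  · have hgr : ¬ (0 < R + 1 ∧ R + 1 ≤ cnt q (Δ (R + 1))) :=
      Nat.findGreatest_is_greatest (P := fun r => 0 < r ∧ r ≤ cnt q (Δ r)) (n := m)
        (k := R + 1) (by rw [← heq]; omega) (by omega)
    have hmono : cnt q (Δ R) ≤ cnt q (Δ (R + 1)) := cnt_mono_right q (hΔ (by omega))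
    omega

lemma rejectSet_card (hΔ : Monotone Δ) (q : Fin m → ℝ) :
    (rejectSet Δ q).card = stepUpCount Δ q := by
  unfold rejectSet
  by_cases h : 0 < stepUpCount Δ q
  · rw [if_pos h]
    exact cnt_at_R hΔ q h
  · rw [if_neg h]
    simp; omega

section LOO
variable {q : Fin m → ℝ} {i : Fin m}

lemma R_le_R' (hΔ0 : ∀ r, 0 ≤ Δ r) (hq : ∀ j, 0 ≤ q j) :
    stepUpCount Δ q ≤ stepUpCount Δ (Function.update q i 0) := by
  rw [stepUpCount_eq_cnt, stepUpCount_eq_cnt]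
  apply Nat.findGreatest_mono _ le_rfl
  rintro r ⟨hr, hle⟩
  refine ⟨hr, hle.trans (cnt_anti ?_ _)⟩
  intro j
  rcases eq_or_ne j i with rfl | hji
  · simp [hq j]
  · simp [Function.update_of_ne hji]

lemma cnt_update_eq (hq : ∀ j, 0 ≤ q j) {c : ℝ} (h : q i ≤ c) :
    cnt (Function.update q i 0) c = cnt q c := by
  unfold cnt
  congr 1
  apply Finset.filter_congr
  intro j _
  rcases eq_or_ne j i with rfl | hji
  · simp only [Function.update_self]
    constructor
    · intro _; exact h
    · intro _; exact le_trans (hq j) h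
  · simp [Function.update_of_ne hji]

lemma R'_pos (hm : 0 < m) (hΔ1 : 0 ≤ Δ 1) :
    0 < stepUpCount Δ (Function.update q i 0) := by
  rw [stepUpCount_eq_cnt]
  have h1 : 0 < cnt (Function.update q i 0) (Δ 1) := by
    unfold cnt
    exact Finset.card_pos.mpr ⟨i, by simp [hΔ1]⟩
  exact lt_of_lt_of_le one_pos (Nat.le_findGreatest hm ⟨one_pos, h1⟩)

lemma R_eq_R' (hm : 0 < m) (hΔ : Monotone Δ) (hΔ0 : ∀ r, 0 ≤ Δ r) (hq : ∀ j, 0 ≤ q j)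
    (h : q i ≤ Δ (stepUpCount Δ (Function.update q i 0))) :
    stepUpCount Δ q = stepUpCount Δ (Function.update q i 0) := by
  refine le_antisymm (R_le_R' hΔ0 hq) ?_
  set R' := stepUpCount Δ (Function.update q i 0) with hR'
  have hpos : 0 < R' := R'_pos hm (hΔ0 1)
  have hR'm : R' ≤ m := stepUpCount_le Δ _
  have hspec : 0 < R' ∧ R' ≤ cnt (Function.update q i 0) (Δ R') := by
    apply Nat.findGreatest_of_ne_zero (stepUpCount_eq_cnt Δ _).symm
    omega
  have hcnt : R' ≤ cnt q (Δ R') := by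
    rw [← cnt_update_eq hq h]; exact hspec.2
  rw [stepUpCount_eq_cnt]
  exact Nat.le_findGreatest hR'm ⟨hpos, hcnt⟩

lemma mem_rejectSet_iff (hm : 0 < m) (hΔ : Monotone Δ) (hΔ0 : ∀ r, 0 ≤ Δ r)
    (hq : ∀ j, 0 ≤ q j) :
    i ∈ rejectSet Δ q ↔ q i ≤ Δ (stepUpCount Δ (Function.update q i 0)) := by
  constructor
  · intro hi
    unfold rejectSet at hi
    by_cases h : 0 < stepUpCount Δ q
    · rw [if_pos h, Finset.mem_filter] at hi
      exact hi.2.trans (hΔ (R_le_R' hΔ0 hq))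
    · rw [if_neg h] at hi; exact absurd hi (Finset.notMem_empty i)
  · intro h
    have heq := R_eq_R' hm hΔ hΔ0 hq h
    have hpos : 0 < stepUpCount Δ q := heq ▸ R'_pos hm (hΔ0 1)
    unfold rejectSet
    rw [if_pos hpos, Finset.mem_filter]
    exact ⟨Finset.mem_univ i, heq ▸ h⟩

end LOO


lemma measurable_cnt (c : ℝ) : Measurable (fun q : Fin m → ℝ => cnt q c) := by
  unfold cnt
  simp only [Finset.card_filter]
  apply Finset.measurable_sum
  intro j _
  have hs : MeasurableSet {q : Fin m → ℝ | q j ≤ c} :=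
    measurableSet_le (measurable_pi_apply j) measurable_const
  exact Measurable.ite hs measurable_const measurable_const

lemma measurable_fg (Δ : ℕ → ℝ) (n : ℕ) :
    Measurable (fun q : Fin m → ℝ =>
      Nat.findGreatest (fun r => 0 < r ∧ r ≤ cnt q (Δ r)) n) := by
  induction n with
  | zero => simpa using measurable_const
  | succ n ih =>
    have : (fun q : Fin m → ℝ =>
        Nat.findGreatest (fun r => 0 < r ∧ r ≤ cnt q (Δ r)) (n + 1)) =
        fun q => if 0 < n + 1 ∧ n + 1 ≤ cnt q (Δ (n + 1)) then n + 1 else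
          Nat.findGreatest (fun r => 0 < r ∧ r ≤ cnt q (Δ r)) n := by
      funext q
      exact Nat.findGreatest_succ n
    rw [this]
    have hs : MeasurableSet {q : Fin m → ℝ | 0 < n + 1 ∧ n + 1 ≤ cnt q (Δ (n + 1))} := by
      have : {q : Fin m → ℝ | 0 < n + 1 ∧ n + 1 ≤ cnt q (Δ (n + 1))} =
          (fun q => cnt q (Δ (n + 1))) ⁻¹' (Set.Ici (n + 1)) := by
        ext q; simp
      rw [this]
      exact measurable_cnt (Δ (n + 1)) measurableSet_Ici
    exact Measurable.ite hs measurable_const ih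

lemma measurable_updZero (i : Fin m) :
    Measurable (fun q : Fin m → ℝ => Function.update q i 0) := by
  apply measurable_pi_lambda
  intro j
  rcases eq_or_ne j i with rfl | hji
  · simpa [Function.update_self] using measurable_const
  · simpa [Function.update_of_ne hji] using measurable_pi_apply j

lemma indep_loo {Ω : Type*} [MeasurableSpace Ω] (P : Measure Ω) [IsProbabilityMeasure P]
    {m : ℕ} (p : Fin m → Ω → ℝ) (hmeas : ∀ i, Measurable (p i))
    (hindep : iIndepFun p P) (i : Fin m)
    (F : (Fin m → ℝ) → ℕ) (hF : Measurable F) (t : ℝ) (r : ℕ) :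
    P ({ω | p i ω ≤ t} ∩ {ω | F (Function.update (fun j => p j ω) i 0) = r})
      = P {ω | p i ω ≤ t} * P {ω | F (Function.update (fun j => p j ω) i 0) = r} := by
  have hiI : iIndep (fun j => MeasurableSpace.comap (p j) inferInstance) P :=
    (iIndepFun_iff_iIndep _ _ _).mp hindep
  have h_le : ∀ j, MeasurableSpace.comap (p j) inferInstance ≤ ‹MeasurableSpace Ω› :=
    fun j => (hmeas j).comap_le
  have hInd := indep_biSup_compl h_le hiI ({i} : Set (Fin m))
  have hA : MeasurableSet[⨆ n ∈ ({i} : Set (Fin m)),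
      MeasurableSpace.comap (p n) inferInstance] {ω | p i ω ≤ t} := by
    have hA' : MeasurableSet[MeasurableSpace.comap (p i) inferInstance] {ω | p i ω ≤ t} :=
      ⟨Set.Iic t, measurableSet_Iic, rfl⟩
    exact le_iSup₂ (f := fun n (_ : n ∈ ({i} : Set (Fin m))) =>
      MeasurableSpace.comap (p n) inferInstance) i rfl _ hA'
  have hU : Measurable[⨆ n ∈ ({i} : Set (Fin m))ᶜ,
      MeasurableSpace.comap (p n) inferInstance]
      (fun ω => Function.update (fun j => p j ω) i 0) := by
    apply (@measurable_pi_iff Ω (Fin m) (fun _ => ℝ)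
      (⨆ n ∈ ({i} : Set (Fin m))ᶜ, MeasurableSpace.comap (p n) inferInstance)
      (fun _ => inferInstance) _).mpr
    intro j
    rcases eq_or_ne j i with rfl | hji
    · simp only [Function.update_self]
      exact measurable_const
    · simp only [Function.update_of_ne hji]
      have h1 : Measurable[MeasurableSpace.comap (p j) inferInstance] (p j) :=
        Measurable.of_comap_le le_rfl
      exact h1.mono (le_iSup₂ (f := fun n (_ : n ∈ ({i} : Set (Fin m))ᶜ) =>
        MeasurableSpace.comap (p n) inferInstance) j hji) le_rfl
  have hB : MeasurableSet[⨆ n ∈ ({i} : Set (Fin m))ᶜ,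
      MeasurableSpace.comap (p n) inferInstance]
      {ω | F (Function.update (fun j => p j ω) i 0) = r} := by
    have : {ω | F (Function.update (fun j => p j ω) i 0) = r} =
        (fun ω => F (Function.update (fun j => p j ω) i 0)) ⁻¹' {r} := rfl
    rw [this]
    exact (hF.comp hU) (measurableSet_singleton r)
  exact (Indep_iff _ _ _).mp hInd _ _ hA hB

end BHaux

/-- FDR control of the Benjamini–Hochberg procedure under independence:
for independent p-values with superuniform null p-values, the BH(α) procedure (the step-up
procedure with thresholds `Δ(r) = αr/m`) has FDR at most `α·|H₀|/m`; if moreover the null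
p-values are exactly uniform, its FDR is exactly `α·|H₀|/m`. -/
theorem bh_fdr_independent
    {Ω : Type*} [MeasurableSpace Ω] (P : Measure Ω) [IsProbabilityMeasure P]
    {m : ℕ} (hm : 0 < m) (α : ℝ) (hα : α ∈ Set.Ioc (0 : ℝ) 1)
    (H0 : Finset (Fin m))
    (p : Fin m → Ω → ℝ) (hmeas : ∀ i, Measurable (p i))
    (hval : ∀ i ω, p i ω ∈ Set.Icc (0 : ℝ) 1)
    (hindep : iIndepFun p P)
    (hsuper : ∀ i ∈ H0, ∀ t ∈ Set.Icc (0 : ℝ) 1, P {ω | p i ω ≤ t} ≤ ENNReal.ofReal t) :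
    (∫ ω, ((rejectSet (fun r => α * r / m) (fun i => p i ω) ∩ H0).card : ℝ) /
          ((max (rejectSet (fun r => α * r / m) (fun i => p i ω)).card 1 : ℕ) : ℝ) ∂P
        ≤ α * H0.card / m) ∧
    ((∀ i ∈ H0, ∀ t ∈ Set.Icc (0 : ℝ) 1, P {ω | p i ω ≤ t} = ENNReal.ofReal t) →
      ∫ ω, ((rejectSet (fun r => α * r / m) (fun i => p i ω) ∩ H0).card : ℝ) /
          ((max (rejectSet (fun r => α * r / m) (fun i => p i ω)).card 1 : ℕ) : ℝ) ∂P
        = α * H0.card / m) := by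

  classical
  obtain ⟨hα0, hα1⟩ := hα
  have hm0 : (0 : ℝ) < m := by exact_mod_cast hm
  set Δ : ℕ → ℝ := fun r => α * r / m with hΔdef
  have hΔmono : Monotone Δ := by
    intro a b hab
    have hcast : (a : ℝ) ≤ b := Nat.cast_le.mpr hab
    simp only [hΔdef]
    gcongr
  have hΔ0 : ∀ r, 0 ≤ Δ r := by
    intro r
    simp only [hΔdef]
    positivity
  have hΔle1 : ∀ r, r ≤ m → Δ r ≤ 1 := by
    intro r hr
    simp only [hΔdef]
    rw [div_le_one hm0]
    calc α * r ≤ 1 * r := by gcongr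
    _ = (r : ℝ) := one_mul _
    _ ≤ m := Nat.cast_le.mpr hr
  -- abbreviations
  set F : (Fin m → ℝ) → ℕ := stepUpCount Δ with hFdef
  have hFmeas : Measurable F := by
    have : F = fun q => Nat.findGreatest (fun r => 0 < r ∧ r ≤ BHaux.cnt q (Δ r)) m := by
      funext q
      exact BHaux.stepUpCount_eq_cnt Δ q
    rw [this]
    exact BHaux.measurable_fg Δ m
  set Ri : Fin m → Ω → ℕ := fun i ω => F (Function.update (fun j => p j ω) i 0) with hRidef
  set S : Fin m → ℕ → Set Ω :=
    fun i r => {ω | p i ω ≤ Δ r} ∩ {ω | Ri i ω = r} with hSdef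
  have hq0 : ∀ ω j, 0 ≤ (fun i => p i ω) j := fun ω j => (hval j ω).1
  have hRi1 : ∀ i ω, 1 ≤ Ri i ω := fun i ω => BHaux.R'_pos (q := fun j => p j ω) hm (hΔ0 1)
  have hRim : ∀ i ω, Ri i ω ≤ m := fun i ω => BHaux.stepUpCount_le Δ _
  have hmeasRi : ∀ i, Measurable (Ri i) := by
    intro i
    apply hFmeas.comp
    exact (BHaux.measurable_updZero i).comp (measurable_pi_lambda _ (fun j => hmeas j))
  have hSmeas : ∀ i r, MeasurableSet (S i r) := by
    intro i r
    exact (measurableSet_le (hmeas i) measurable_const).inter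
      ((hmeasRi i) (measurableSet_singleton r))
  -- pointwise identity
  have key : ∀ ω, ((rejectSet Δ (fun i => p i ω) ∩ H0).card : ℝ) /
      ((max (rejectSet Δ (fun i => p i ω)).card 1 : ℕ) : ℝ) =
      ∑ i ∈ H0, ∑ r ∈ Finset.Icc 1 m, (S i r).indicator (fun _ => ((r : ℝ))⁻¹) ω := by
    intro ω
    set ℛ := rejectSet Δ (fun i => p i ω) with hℛ
    have hcard : ((ℛ ∩ H0).card : ℝ) = ∑ i ∈ H0, if i ∈ ℛ then (1 : ℝ) else 0 := by
      have h1 : ℛ ∩ H0 = H0.filter (fun i => i ∈ ℛ) := by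
        rw [Finset.filter_mem_eq_inter, Finset.inter_comm]
      rw [h1, Finset.card_filter]
      push_cast
      rfl
    rw [hcard, Finset.sum_div]
    apply Finset.sum_congr rfl
    intro i _
    by_cases hir : p i ω ≤ Δ (Ri i ω)
    · have himem : i ∈ ℛ :=
        (BHaux.mem_rejectSet_iff hm hΔmono hΔ0 (hq0 ω)).mpr hir
      have hcardℛ : ℛ.card = Ri i ω := by
        rw [hℛ, BHaux.rejectSet_card hΔmono,
          BHaux.R_eq_R' hm hΔmono hΔ0 (hq0 ω) hir]
      have hmax : max ℛ.card 1 = Ri i ω := by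
        rw [hcardℛ]; exact max_eq_left (hRi1 i ω)
      have hmem : ω ∈ S i (Ri i ω) := by
        simp only [hSdef, Set.mem_inter_iff, Set.mem_setOf_eq]
        exact ⟨hir, trivial⟩
      have hzero : ∀ r ∈ Finset.Icc 1 m, r ≠ Ri i ω →
          (S i r).indicator (fun _ => ((r : ℝ))⁻¹) ω = 0 := by
        intro r _ hrne
        apply Set.indicator_of_notMem
        simp only [hSdef, Set.mem_inter_iff, Set.mem_setOf_eq, not_and]
        intro _ h2
        exact hrne h2.symm
      rw [if_pos himem, hmax, one_div,
        Finset.sum_eq_single_of_mem (Ri i ω)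
          (Finset.mem_Icc.mpr ⟨hRi1 i ω, hRim i ω⟩) hzero,
        Set.indicator_of_mem hmem]
    · have hnot : i ∉ ℛ := fun h =>
        hir ((BHaux.mem_rejectSet_iff hm hΔmono hΔ0 (hq0 ω)).mp h)
      rw [if_neg hnot, zero_div]
      symm
      apply Finset.sum_eq_zero
      intro r hr
      apply Set.indicator_of_notMem
      simp only [hSdef, Set.mem_inter_iff, Set.mem_setOf_eq, not_and]
      intro h1 h2
      rw [← h2] at h1
      exact hir h1
  have hint : ∀ i r, Integrable ((S i r).indicator (fun _ => ((r : ℝ))⁻¹)) P :=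
    fun i r => (integrable_const _).indicator (hSmeas i r)
  -- the integral
  have hInt : ∫ ω, ((rejectSet Δ (fun i => p i ω) ∩ H0).card : ℝ) /
      ((max (rejectSet Δ (fun i => p i ω)).card 1 : ℕ) : ℝ) ∂P =
      ∑ i ∈ H0, ∑ r ∈ Finset.Icc 1 m,
        (P (S i r)).toReal * ((r : ℝ))⁻¹ := by
    rw [integral_congr_ae (Filter.EventuallyEq.of_eq (funext key))]
    rw [integral_finset_sum _ (fun i _ => integrable_finset_sum _ (fun r _ => hint i r))]
    apply Finset.sum_congr rfl
    intro i _
    rw [integral_finset_sum _ (fun r _ => hint i r)]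
    apply Finset.sum_congr rfl
    intro r _
    rw [integral_indicator_const _ (hSmeas i r)]
    simp [mul_comm, measureReal_def]
  -- independence
  have hprod : ∀ i r, P (S i r) = P {ω | p i ω ≤ Δ r} * P {ω | Ri i ω = r} := by
    intro i r
    exact BHaux.indep_loo P p hmeas hindep i F hFmeas (Δ r) r
  -- partition of unity
  have hsumB : ∀ i, ∑ r ∈ Finset.Icc 1 m, (P {ω | Ri i ω = r}).toReal = 1 := by
    intro i
    have hdisj : (↑(Finset.Icc 1 m : Finset ℕ) : Set ℕ).PairwiseDisjoint
        (fun r => {ω | Ri i ω = r}) := by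
      intro a _ b _ hab
      simp only [Function.onFun, Set.disjoint_left]
      rintro ω h1 h2
      exact hab (h1.symm.trans h2)
    have hunion : ⋃ r ∈ Finset.Icc 1 m, {ω | Ri i ω = r} = Set.univ := by
      ext ω
      simp only [Set.mem_iUnion, Set.mem_setOf_eq, Set.mem_univ, iff_true]
      exact ⟨Ri i ω, Finset.mem_Icc.mpr ⟨hRi1 i ω, hRim i ω⟩, rfl⟩
    have hmeasB : ∀ r ∈ Finset.Icc 1 m, MeasurableSet {ω | Ri i ω = r} :=
      fun r _ => (hmeasRi i) (measurableSet_singleton r)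
    have hsum : ∑ r ∈ Finset.Icc 1 m, P {ω | Ri i ω = r} = 1 := by
      rw [← measure_biUnion_finset hdisj hmeasB, hunion, measure_univ]
    rw [← ENNReal.toReal_sum (fun r _ => measure_ne_top P _), hsum, ENNReal.toReal_one]
  have hPA_le : ∀ i ∈ H0, ∀ r ∈ Finset.Icc 1 m,
      (P {ω | p i ω ≤ Δ r}).toReal ≤ Δ r := by
    intro i hi r hr
    obtain ⟨hr1, hrm⟩ := Finset.mem_Icc.mp hr
    exact ENNReal.toReal_le_of_le_ofReal (hΔ0 r)
      (hsuper i hi (Δ r) ⟨hΔ0 r, hΔle1 r hrm⟩)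
  have hfinal : ∀ i ∈ H0, ∑ r ∈ Finset.Icc 1 m,
      (α / m) * (P {ω | Ri i ω = r}).toReal = α / m := by
    intro i _
    rw [← Finset.mul_sum, hsumB i, mul_one]
  have hΔr_inv : ∀ r ∈ Finset.Icc 1 m, Δ r * ((r : ℝ))⁻¹ = α / m := by
    intro r hr
    obtain ⟨hr1, -⟩ := Finset.mem_Icc.mp hr
    have hr0 : (r : ℝ) ≠ 0 := by
      exact_mod_cast Nat.one_le_iff_ne_zero.mp hr1
    simp only [hΔdef]
    field_simp
  have hgoal_rhs : ∑ i ∈ H0, (α / m) = α * H0.card / m := by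
    rw [Finset.sum_const, nsmul_eq_mul]
    ring
  constructor
  · rw [hInt]
    calc ∑ i ∈ H0, ∑ r ∈ Finset.Icc 1 m, (P (S i r)).toReal * ((r : ℝ))⁻¹
        ≤ ∑ i ∈ H0, ∑ r ∈ Finset.Icc 1 m,
          (α / m) * (P {ω | Ri i ω = r}).toReal := by
          apply Finset.sum_le_sum
          intro i hi
          apply Finset.sum_le_sum
          intro r hr
          rw [hprod i r, ENNReal.toReal_mul]
          calc (P {ω | p i ω ≤ Δ r}).toReal * (P {ω | Ri i ω = r}).toReal * ((r : ℝ))⁻¹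
              ≤ Δ r * (P {ω | Ri i ω = r}).toReal * ((r : ℝ))⁻¹ :=
                mul_le_mul_of_nonneg_right
                  (mul_le_mul_of_nonneg_right (hPA_le i hi r hr) ENNReal.toReal_nonneg)
                  (inv_nonneg.mpr (Nat.cast_nonneg r))
            _ = (α / m) * (P {ω | Ri i ω = r}).toReal := by
                rw [mul_right_comm, hΔr_inv r hr]
      _ = ∑ i ∈ H0, (α / m) := Finset.sum_congr rfl hfinal
      _ = α * H0.card / m := hgoal_rhs
  · intro hunif
    rw [hInt]
    have hPA_eq : ∀ i ∈ H0, ∀ r ∈ Finset.Icc 1 m,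
        (P {ω | p i ω ≤ Δ r}).toReal = Δ r := by
      intro i hi r hr
      obtain ⟨hr1, hrm⟩ := Finset.mem_Icc.mp hr
      rw [hunif i hi (Δ r) ⟨hΔ0 r, hΔle1 r hrm⟩, ENNReal.toReal_ofReal (hΔ0 r)]
    calc ∑ i ∈ H0, ∑ r ∈ Finset.Icc 1 m, (P (S i r)).toReal * ((r : ℝ))⁻¹
        = ∑ i ∈ H0, ∑ r ∈ Finset.Icc 1 m,
          (α / m) * (P {ω | Ri i ω = r}).toReal := by
          apply Finset.sum_congr rfl
          intro i hi
          apply Finset.sum_congr rfl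
          intro r hr
          rw [hprod i r, ENNReal.toReal_mul, hPA_eq i hi r hr,
            mul_right_comm, hΔr_inv r hr]
      _ = ∑ i ∈ H0, (α / m) := Finset.sum_congr rfl hfinal
      _ = α * H0.card / m := hgoal_rhs
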